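/- (Closed-form Sparsegen routing) For every u ∈ ℝ^E and every real λ < 1, the unique minimizer of g_{u,λ}(p) = ‖p − u‖₂² − λ‖p‖₂² over the probability simplex Δ is given coordinatewise by p_i = max((u_i − τ)/(1 − λ), 0) for i = 1,…,E, where τ = (U_{k*} − 1 + λ)/k* and k* = max{k ∈ {1,…,E} : 1 − λ + k·u_(k) > U_k}. -/

import Mathlib

noncomputable section

/-- The probability simplex in `ℝ^E`. -/
def simplex (E : ℕ) : Set (EuclideanSpace ℝ (Fin E)) :=
  {p | (∀ i, 0 ≤ p i) ∧ ∑ i, p i = 1}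

/-- The Sparsegen objective `g_{u,λ}(p) = ‖p − u‖₂² − λ‖p‖₂²`. -/
def sparsegenObj {E : ℕ} (u : EuclideanSpace ℝ (Fin E)) (lam : ℝ)
    (p : EuclideanSpace ℝ (Fin E)) : ℝ :=
  ‖p - u‖ ^ 2 - lam * ‖p‖ ^ 2

/-- `U k = Σ_{i=1}^{k} u_(i)` where `u_(i) = u (σ i)` are the sorted coordinates;
here `k : Fin E` corresponds to the paper's 1-based index `k + 1`. -/
def sortedPartialSum {E : ℕ} (u : EuclideanSpace ℝ (Fin E)) (σ : Equiv.Perm (Fin E))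
    (k : Fin E) : ℝ :=
  ∑ i ∈ Finset.Iic k, u (σ i)

/-- Closed-form Sparsegen routing: for every `u ∈ ℝ^E` and `λ < 1`, the unique
minimizer of `g_{u,λ}` over the probability simplex is given coordinatewise by
`p_i = max((u_i − τ)/(1 − λ), 0)`, where `τ = (U_{k*} − 1 + λ)/k*` and `k*` is the
maximal index with `1 − λ + k·u_(k) > U_k`. -/
lemma norm_sq_eq {E : ℕ} (x : EuclideanSpace ℝ (Fin E)) : ‖x‖^2 = ∑ i, x i ^ 2 := by
  rw [EuclideanSpace.norm_eq, Real.sq_sqrt (Finset.sum_nonneg fun i _ => sq_nonneg _)]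
  simp [sq_abs]

theorem sparsegen_closed_form (E : ℕ) (hE : 1 ≤ E)
    (u : EuclideanSpace ℝ (Fin E)) (σ : Equiv.Perm (Fin E))
    (hσ : Antitone fun i => u (σ i)) (lam : ℝ) (hlam : lam < 1)
    (kstar : Fin E)
    (hmem : 1 - lam + ((kstar : ℕ) + 1) * u (σ kstar) > sortedPartialSum u σ kstar)
    (hmax : ∀ k : Fin E,
      (1 - lam + ((k : ℕ) + 1) * u (σ k) > sortedPartialSum u σ k) → k ≤ kstar)
    (τ : ℝ) (hτ : τ = (sortedPartialSum u σ kstar - 1 + lam) / ((kstar : ℕ) + 1))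
    (q : EuclideanSpace ℝ (Fin E)) (hq : ∀ i, q i = max ((u i - τ) / (1 - lam)) 0) :
    (q ∈ simplex E ∧ IsMinOn (sparsegenObj u lam) (simplex E) q) ∧
    ∀ p : EuclideanSpace ℝ (Fin E),
      p ∈ simplex E → IsMinOn (sparsegenObj u lam) (simplex E) p → p = q := by
  have hc : (0:ℝ) < 1 - lam := by linarith
  have hk1 : (0:ℝ) < (kstar:ℕ) + 1 := by positivity
  -- τ < u (σ kstar)
  have hτk : τ < u (σ kstar) := by
    rw [hτ, div_lt_iff₀ hk1]; nlinarith [hmem]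
  have hle : ∀ i : Fin E, i ≤ kstar → τ < u (σ i) := fun i hi =>
    lt_of_lt_of_le hτk (hσ hi)
  -- for i > kstar : u (σ i) ≤ τ
  have hgt : ∀ i : Fin E, kstar < i → u (σ i) ≤ τ := by
    intro i hi
    have hmlt : (kstar:ℕ) + 1 < E := lt_of_le_of_lt (Nat.succ_le_of_lt hi) i.isLt
    set m : Fin E := ⟨(kstar:ℕ)+1, hmlt⟩ with hm
    have hmk : kstar < m := by simp [Fin.lt_def, hm]
    have hnot : ¬ (1 - lam + ((m : ℕ) + 1) * u (σ m) > sortedPartialSum u σ m) :=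
      fun h => absurd (hmax m h) (not_le.mpr hmk)
    push_neg at hnot
    have hins : Finset.Iic m = insert m (Finset.Iic kstar) := by
      ext j
      simp only [Finset.mem_Iic, Finset.mem_insert, Fin.le_def, Fin.ext_iff, hm]
      omega
    have hsum : sortedPartialSum u σ m = u (σ m) + sortedPartialSum u σ kstar := by
      unfold sortedPartialSum
      rw [hins, Finset.sum_insert (by simp [Fin.le_def, hm])]
    have hmv : ((m:ℕ) : ℝ) = (kstar:ℕ) + 1 := by simp [hm]
    have humτ : u (σ m) ≤ τ := by
      rw [hτ, le_div_iff₀ hk1]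
      rw [hmv, hsum] at hnot
      nlinarith [hnot]
    have : u (σ i) ≤ u (σ m) := hσ (by rw [Fin.le_def]; simpa [hm] using hi)
    linarith
  -- q along σ
  have hq0 : ∀ i, 0 ≤ q i := fun i => (hq i) ▸ le_max_right _ _
  have hqle : ∀ i : Fin E, i ≤ kstar → q (σ i) = (u (σ i) - τ) / (1 - lam) := by
    intro i hi
    rw [hq (σ i), max_eq_left]
    exact div_nonneg (by linarith [hle i hi]) hc.le
  have hqgt : ∀ i : Fin E, kstar < i → q (σ i) = 0 := by
    intro i hi
    rw [hq (σ i), max_eq_right]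
    exact div_nonpos_of_nonpos_of_nonneg (by linarith [hgt i hi]) hc.le
  have hτeq : ((kstar:ℕ) + 1) * τ = sortedPartialSum u σ kstar - 1 + lam := by
    rw [hτ]; field_simp
  -- sum of q = 1
  have hsumq : ∑ i, q i = 1 := by
    rw [← Equiv.sum_comp σ q]
    rw [← Finset.sum_add_sum_compl (Finset.Iic kstar)]
    have h1 : ∑ i ∈ Finset.Iic kstar, q (σ i)
        = (sortedPartialSum u σ kstar - ((kstar:ℕ)+1) * τ) / (1 - lam) := by
      rw [Finset.sum_congr rfl (fun i hi => hqle i (Finset.mem_Iic.mp hi))]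
      rw [← Finset.sum_div, Finset.sum_sub_distrib, Finset.sum_const, Fin.card_Iic]
      unfold sortedPartialSum
      push_cast
      ring_nf
    have h2 : ∑ i ∈ (Finset.Iic kstar)ᶜ, q (σ i) = 0 :=
      Finset.sum_eq_zero fun i hi => hqgt i (by
        simpa [Finset.mem_compl, Finset.mem_Iic, not_le] using hi)
    rw [h1, h2, hτeq, add_zero]
    field_simp
    ring
  have hqmem : q ∈ simplex E := ⟨hq0, hsumq⟩
  -- pointwise facts for the key inequality
  have hcq : ∀ i, (1 - lam) * q i = max (u i - τ) 0 := by
    intro i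
    rcases le_or_gt (u i) τ with h | h
    · have hz : q i = 0 := by
        rw [hq i]; exact max_eq_right (div_nonpos_of_nonpos_of_nonneg (by linarith) hc.le)
      rw [hz, mul_zero, max_eq_right (by linarith : u i - τ ≤ 0)]
    · have hz : q i = (u i - τ) / (1 - lam) := by
        rw [hq i]; exact max_eq_left (div_nonneg (by linarith) hc.le)
      rw [hz, max_eq_left (by linarith : (0:ℝ) ≤ u i - τ)]
      field_simp
  have hr0 : ∀ i, 0 ≤ (1 - lam) * q i - u i + τ := by
    intro i
    have := hcq i
    nlinarith [le_max_left (u i - τ) 0, le_max_right (u i - τ) 0]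
  have hqr : ∀ i, q i * ((1 - lam) * q i - u i + τ) = 0 := by
    intro i
    rcases le_or_gt (u i) τ with h | h
    · have : q i = 0 := by
        rw [hq i, max_eq_right (div_nonpos_of_nonpos_of_nonneg (by linarith) hc.le)]
      rw [this, zero_mul]
    · have : (1 - lam) * q i = u i - τ := by
        rw [hcq i, max_eq_left (by linarith)]
      rw [this]; ring
  -- key inequality
  have key : ∀ p ∈ simplex E, sparsegenObj u lam q
      + (1 - lam) * ∑ i, (p i - q i)^2 ≤ sparsegenObj u lam p := by
    intro p hp
    obtain ⟨hp0, hp1⟩ := hp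
    have e : ∀ x : EuclideanSpace ℝ (Fin E),
        sparsegenObj u lam x = ∑ i, ((x i - u i)^2 - lam * x i^2) := by
      intro x
      unfold sparsegenObj
      rw [norm_sq_eq, norm_sq_eq, Finset.mul_sum, ← Finset.sum_sub_distrib]
      rfl
    have termwise :
        ∑ i, (((p i - u i)^2 - lam * p i^2) - ((q i - u i)^2 - lam * q i^2))
        = ∑ i, ((1-lam)*(p i - q i)^2 + 2*(p i * ((1-lam)*q i - u i + τ))
            - 2*(q i * ((1-lam)*q i - u i + τ)) - 2*τ*p i + 2*τ*q i) :=
      Finset.sum_congr rfl fun i _ => by ring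
    have hL : ∑ i, (((p i - u i)^2 - lam * p i^2) - ((q i - u i)^2 - lam * q i^2))
        = sparsegenObj u lam p - sparsegenObj u lam q := by
      rw [e p, e q, Finset.sum_sub_distrib]
    have hR : ∑ i, ((1-lam)*(p i - q i)^2 + 2*(p i * ((1-lam)*q i - u i + τ))
            - 2*(q i * ((1-lam)*q i - u i + τ)) - 2*τ*p i + 2*τ*q i)
        = (1-lam) * ∑ i, (p i - q i)^2 + 2 * ∑ i, p i * ((1-lam)*q i - u i + τ) := by
      simp only [Finset.sum_add_distrib, Finset.sum_sub_distrib, ← Finset.mul_sum]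
      rw [Finset.sum_congr rfl (fun i _ => hqr i), Finset.sum_const_zero, hp1, hsumq]
      ring
    have hpr : 0 ≤ ∑ i, p i * ((1-lam)*q i - u i + τ) :=
      Finset.sum_nonneg fun i _ => mul_nonneg (hp0 i) (hr0 i)
    rw [hL, hR] at termwise
    linarith
  have hmin : IsMinOn (sparsegenObj u lam) (simplex E) q := by
    rw [isMinOn_iff]
    intro p hp
    have := key p hp
    have hs : 0 ≤ ∑ i, (p i - q i)^2 := Finset.sum_nonneg fun i _ => sq_nonneg _
    nlinarith
  refine ⟨⟨hqmem, hmin⟩, ?_⟩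
  intro p hp hpmin
  have h1 := key p hp
  have h2 : sparsegenObj u lam p ≤ sparsegenObj u lam q := (isMinOn_iff.mp hpmin) q hqmem
  have hs : ∑ i, (p i - q i)^2 ≤ 0 := by nlinarith
  have hz : ∀ i ∈ Finset.univ, (p i - q i)^2 = 0 := by
    intro i _
    have := Finset.sum_nonneg (s := (Finset.univ : Finset (Fin E)))
      (f := fun i => (p i - q i)^2) (fun i _ => sq_nonneg _)
    have heq : ∑ i, (p i - q i)^2 = 0 := le_antisymm hs this
    exact (Finset.sum_eq_zero_iff_of_nonneg (fun i _ => sq_nonneg _)).mp heq i (Finset.mem_univ i)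
  ext i
  have := hz i (Finset.mem_univ i)
  have := sq_eq_zero_iff.mp this
  linarith
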